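/- arXiv:1903.01157 — 4 statements merged into one kernel-verified Lean document; each statement's English description precedes it below -/
import Mathlib

section
/- For every nonnegative integer M, the triple sum over nonnegative integers m, n1, n2 of C(3(M-m-n1-n2), m) * C(M-m-n1-n2 + floor(n1/2), floor(n1/2)) * C(M-m-n1-n2 + floor(n2/2), floor(n2/2)) equals 3^M, where C(a,b) denotes the binomial coefficient and terms with M-m-n1-n2 < 0 (or any binomial with negative upper index) are zero. -/
open Finset

namespace SchurQAux

open PowerSeries

noncomputable section

/-- `u = 1/(1-X^2)` as a power series over ℤ. -/
def u : PowerSeries ℤ := PowerSeries.mk fun n => if Even n then 1 else 0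

lemma coeff_u (n : ℕ) : (coeff (R := ℤ) n) u = if Even n then 1 else 0 := coeff_mk n _

lemma u_inv : (1 - X ^ 2 : PowerSeries ℤ) * u = 1 := by
  ext n
  rw [sub_mul, one_mul, map_sub, coeff_X_pow_mul' u 2 n, coeff_u, coeff_one]
  rcases Nat.lt_or_ge n 2 with h | h
  · interval_cases n <;> simp
  · rw [if_pos h, coeff_u]
    have hpar : Even (n - 2) ↔ Even n := by
      rw [Nat.even_sub h]; simp
    have hn : n ≠ 0 := by omega
    rcases Nat.even_or_odd n with he | ho
    · rw [if_pos he, if_pos (hpar.mpr he), if_neg hn]; ring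
    · rw [if_neg (Nat.not_even_iff_odd.mpr ho),
        if_neg (fun h' => (Nat.not_even_iff_odd.mpr ho) (hpar.mp h')), if_neg hn]
      ring

lemma coeff_mul_range (f g : PowerSeries ℤ) (n : ℕ) :
    (coeff (R := ℤ) n) (f * g) = ∑ i ∈ range (n + 1), (coeff (R := ℤ) i) f * (coeff (R := ℤ) (n - i)) g := by
  rw [coeff_mul, Finset.Nat.sum_antidiagonal_eq_sum_range_succ_mk]

lemma sum_even_halves (f : ℕ → ℤ) (t : ℕ) :
    ∑ i ∈ range (2 * t + 1), (if Even i then f (i / 2) else 0) = ∑ j ∈ range (t + 1), f j := by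
  induction t with
  | zero => simp
  | succ t ih =>
    have h : 2 * (t + 1) + 1 = (2 * t + 1) + 1 + 1 := by ring
    have h1 : ¬ Even (2 * t + 1) := by simp [Nat.even_add_one]
    have h2 : Even (2 * t + 1 + 1) := ⟨t + 1, by ring⟩
    have h3 : (2 * t + 1 + 1) / 2 = t + 1 := by omega
    rw [h, sum_range_succ, sum_range_succ, ih, if_neg h1, if_pos h2, h3, add_zero,
      ← sum_range_succ]

lemma hockey_nat (k t : ℕ) : ∑ j ∈ range (t + 1), (k + j).choose j = (k + 1 + t).choose t := by
  have h1 : ∀ j ∈ range (t + 1), (k + j).choose j = (k + j).choose k := by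
    intro j _
    rw [← Nat.choose_symm (Nat.le_add_right k j)]
    congr 1; omega
  rw [Finset.sum_congr rfl h1]
  have h2 : ∑ j ∈ range (t + 1), (k + j).choose k = ∑ i ∈ Icc k (k + t), i.choose k := by
    rw [show Icc k (k + t) = Finset.map ⟨fun j => k + j, add_right_injective k⟩ (range (t + 1)) from ?_]
    · rw [Finset.sum_map]; rfl
    · ext x
      simp only [Finset.mem_map, Finset.mem_Icc, Finset.mem_range, Function.Embedding.coeFn_mk]
      constructor
      · intro hx; exact ⟨x - k, by omega, by omega⟩
      · rintro ⟨j, hj, rfl⟩; omega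
  rw [h2, Nat.sum_Icc_choose]
  rw [← Nat.choose_symm (by omega : t ≤ k + 1 + t)]
  congr 1 <;> omega

lemma hockey (k t : ℕ) :
    ∑ j ∈ range (t + 1), ((k + j).choose j : ℤ) = ((k + 1 + t).choose t : ℤ) := by
  exact_mod_cast congrArg (Nat.cast : ℕ → ℤ) (hockey_nat k t)

lemma coeff_u_pow (k n : ℕ) :
    (coeff (R := ℤ) n) (u ^ (k + 1)) = if Even n then ((k + n / 2).choose (n / 2) : ℤ) else 0 := by
  induction k generalizing n with
  | zero => simp [pow_one, coeff_u]
  | succ k ih =>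
    rw [pow_succ, coeff_mul_range]
    rcases Nat.even_or_odd n with ⟨t, ht⟩ | ho
    · have hn : n = 2 * t := by omega
      subst hn
      have key : ∀ i ∈ range (2 * t + 1),
          (coeff (R := ℤ) i) (u ^ (k + 1)) * (coeff (R := ℤ) (2 * t - i)) u
          = if Even i then ((k + i / 2).choose (i / 2) : ℤ) else 0 := by
        intro i hi
        simp only [mem_range] at hi
        rw [ih, coeff_u]
        rcases Nat.even_or_odd i with he | hoi
        · have hev : Even (2 * t - i) := by
            rw [Nat.even_sub (by omega)]; simp [he]
          simp [he, hev]
        · simp [Nat.not_even_iff_odd.mpr hoi]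
      rw [Finset.sum_congr rfl key, sum_even_halves (fun j => ((k + j).choose j : ℤ)) t, hockey]
      have he : Even (2 * t) := ⟨t, by ring⟩
      rw [if_pos he]
      congr 2 <;> omega
    · have hne : ¬ Even n := Nat.not_even_iff_odd.mpr ho
      rw [if_neg hne]
      refine Finset.sum_eq_zero fun i hi => ?_
      simp only [mem_range] at hi
      rw [ih, coeff_u]
      rcases Nat.even_or_odd i with he | hoi
      · have hne2 : ¬ Even (n - i) := by
          rw [Nat.even_sub (by omega)]
          simp [he, hne]
        simp [hne2]
      · simp [Nat.not_even_iff_odd.mpr hoi]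

/-- `P L = (1+X) * u^(L+1)`, generating function of `C(L + ⌊n/2⌋, ⌊n/2⌋)`. -/
def P (L : ℕ) : PowerSeries ℤ := (1 + X) * u ^ (L + 1)

lemma coeff_P (L n : ℕ) : (coeff (R := ℤ) n) (P L) = ((L + n / 2).choose (n / 2) : ℤ) := by
  rw [P, add_mul, one_mul, map_add, coeff_u_pow]
  rcases n with _ | m
  · simp
  · rw [show (X : PowerSeries ℤ) * u ^ (L + 1) = u ^ (L + 1) * X from mul_comm _ _,
      coeff_succ_mul_X, coeff_u_pow]
    rcases Nat.even_or_odd m with he | ho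
    · have h1 : ¬ Even (m + 1) := by simp [Nat.even_add_one, he]
      have h2 : (m + 1) / 2 = m / 2 := by rcases he with ⟨s, hs⟩; omega
      rw [if_neg h1, if_pos he, zero_add, h2]
    · have h1 : Even (m + 1) := by simp [Nat.even_add_one, Nat.not_even_iff_odd.mpr ho]
      rw [if_pos h1, if_neg (Nat.not_even_iff_odd.mpr ho), add_zero]

lemma coeff_one_add_X_pow (k n : ℕ) :
    (coeff (R := ℤ) n) ((1 + X) ^ k : PowerSeries ℤ) = (k.choose n : ℤ) := by
  have h : ((1 + X : PowerSeries ℤ)) ^ k =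
      (((1 + Polynomial.X) ^ k : Polynomial ℤ) : PowerSeries ℤ) := by
    rw [Polynomial.coe_pow, Polynomial.coe_add, Polynomial.coe_one, Polynomial.coe_X]
  rw [h, Polynomial.coeff_coe, Polynomial.coeff_one_add_X_pow]

/-- The summand series `S L = X^L (1+X)^{3L} (P L)^2`. -/
def S (L : ℕ) : PowerSeries ℤ := X ^ L * ((1 + X) ^ (3 * L) * (P L * P L))

lemma core : ((1 + X : PowerSeries ℤ)) ^ 2 * u ^ 2 * (1 - 3 * X) + X * (1 + X) ^ 3 * u ^ 2 = 1 := by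
  have h : ((1 - X ^ 2 : PowerSeries ℤ) * u) ^ 2 = 1 := by rw [u_inv]; ring
  calc ((1 + X : PowerSeries ℤ)) ^ 2 * u ^ 2 * (1 - 3 * X) + X * (1 + X) ^ 3 * u ^ 2
      = ((1 - X ^ 2) * u) ^ 2 := by ring
    _ = 1 := h

def G (N : ℕ) : PowerSeries ℤ := ∑ L ∈ range (N + 1), S L

lemma geom (N : ℕ) :
    G N * (1 - 3 * X) =
      1 - X ^ (N + 1) * ((1 + X) ^ (3 * N + 3) * u ^ (2 * N + 2)) := by
  induction N with
  | zero =>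
    rw [G, range_one, sum_singleton, S, P]
    linear_combination core
  | succ N ih =>
    rw [G, sum_range_succ, add_mul, ← G, ih, S, P]
    linear_combination (X ^ (N + 1) * (1 + X) ^ (3 * N + 3) * u ^ (2 * N + 2)) * core

lemma coeff_S_zero_of_lt {M L : ℕ} (h : M < L) : (coeff (R := ℤ) M) (S L) = 0 := by
  rw [S, coeff_X_pow_mul', if_neg (by omega)]

lemma coeff_G_stable {M N : ℕ} (h : M ≤ N) : (coeff (R := ℤ) M) (G N) = (coeff (R := ℤ) M) (G M) := by
  simp only [G, map_sum]
  rw [show N + 1 = (M + 1) + (N - M) from by omega, Finset.sum_range_add]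
  have h0 : ∀ i ∈ range (N - M), (coeff (R := ℤ) M) (S (M + 1 + i)) = 0 := fun i _ =>
    coeff_S_zero_of_lt (by omega)
  rw [Finset.sum_congr rfl h0, Finset.sum_const_zero, add_zero]

/-- Coefficient of `S L` as a double sum. -/
lemma coeff_S (L M : ℕ) (h : L ≤ M) :
    (coeff (R := ℤ) M) (S L) = ∑ m ∈ range (M - L + 1), ∑ n1 ∈ range (M - L - m + 1),
      (((3 * L).choose m : ℤ) * ((L + n1 / 2).choose (n1 / 2) : ℤ) *
        ((L + (M - L - m - n1) / 2).choose ((M - L - m - n1) / 2) : ℤ)) := by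
  rw [S, coeff_X_pow_mul', if_pos h, coeff_mul_range]
  refine Finset.sum_congr rfl fun m hm => ?_
  rw [coeff_one_add_X_pow, coeff_mul_range, Finset.mul_sum]
  refine Finset.sum_congr rfl fun n1 hn1 => ?_
  rw [coeff_P, coeff_P]
  ring

lemma coeff_G_diag (M : ℕ) : (coeff (R := ℤ) M) (G M) = 3 ^ M := by
  induction M with
  | zero =>
    rw [G, range_one, sum_singleton, coeff_S 0 0 le_rfl]
    simp
  | succ m ih =>
    have h := congrArg (coeff (R := ℤ) (m + 1)) (geom (m + 1))
    have e : G (m + 1) * (1 - 3 * X) =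
        G (m + 1) - (G (m + 1) * X + G (m + 1) * X + G (m + 1) * X) := by ring
    rw [e, map_sub, map_add, map_add, coeff_succ_mul_X, map_sub, coeff_one,
      coeff_X_pow_mul', if_neg (by omega)] at h
    have hstab : (coeff (R := ℤ) m) (G (m + 1)) = 3 ^ m := by
      rw [coeff_G_stable (Nat.le_succ m), ih]
    rw [hstab] at h
    norm_num at h
    have h2 : (coeff (R := ℤ) (m + 1)) (G (m + 1)) = 3 ^ m + 3 ^ m + 3 ^ m := by linarith
    rw [h2]; ring

lemma sum_range_guard (f : ℕ → ℤ) {k M : ℕ} (h : k ≤ M) :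
    ∑ i ∈ range (M + 1), (if i ≤ k then f i else 0) = ∑ i ∈ range (k + 1), f i := by
  rw [← Finset.sum_subset (Finset.range_subset_range.mpr (by omega : k + 1 ≤ M + 1))
    (fun x _ hx => by
      rw [if_neg]; simp only [mem_range] at hx; omega)]
  refine Finset.sum_congr rfl fun i hi => ?_
  simp only [mem_range] at hi
  rw [if_pos (by omega)]

lemma coeff_G_eq_triple (M : ℕ) :
    (coeff (R := ℤ) M) (G M) =
      ∑ m ∈ range (M + 1), ∑ n1 ∈ range (M + 1), ∑ L ∈ range (M + 1),
        (if m + n1 + L ≤ M then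
          (((3 * L).choose m : ℤ) * ((L + n1 / 2).choose (n1 / 2) : ℤ) *
            ((L + (M - L - m - n1) / 2).choose ((M - L - m - n1) / 2) : ℤ))
        else 0) := by
  simp only [G, map_sum]
  have h1 : ∀ L ∈ range (M + 1), (coeff (R := ℤ) M) (S L) =
      ∑ m ∈ range (M + 1), ∑ n1 ∈ range (M + 1),
        (if m + n1 + L ≤ M then
          (((3 * L).choose m : ℤ) * ((L + n1 / 2).choose (n1 / 2) : ℤ) *
            ((L + (M - L - m - n1) / 2).choose ((M - L - m - n1) / 2) : ℤ))
        else 0) := by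
    intro L hL
    simp only [mem_range] at hL
    rw [coeff_S L M (by omega)]
    rw [← sum_range_guard _ (by omega : M - L ≤ M)]
    refine Finset.sum_congr rfl fun m _ => ?_
    by_cases hmc : m ≤ M - L
    · rw [if_pos hmc, ← sum_range_guard _ (by omega : M - L - m ≤ M)]
      refine Finset.sum_congr rfl fun n1 _ => ?_
      by_cases hnc : n1 ≤ M - L - m
      · rw [if_pos hnc, if_pos (by omega)]
      · rw [if_neg hnc, if_neg (by omega)]
    · rw [if_neg hmc]
      refine (Finset.sum_eq_zero fun n1 _ => ?_).symm
      rw [if_neg (by omega)]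
  rw [Finset.sum_congr rfl h1, Finset.sum_comm]
  exact Finset.sum_congr rfl fun m _ => Finset.sum_comm

/-- Reindexing `n2 ↦ L = M - m - n1 - n2`. -/
lemma triple_reindex (M : ℕ) :
    (∑ m ∈ range (M + 1), ∑ n1 ∈ range (M + 1), ∑ n2 ∈ range (M + 1),
      (if m + n1 + n2 ≤ M then
        ((3 * (M - m - n1 - n2)).choose m : ℤ) *
          (((M - m - n1 - n2) + n1 / 2).choose (n1 / 2) : ℤ) *
          (((M - m - n1 - n2) + n2 / 2).choose (n2 / 2) : ℤ)
      else 0)) =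
    ∑ m ∈ range (M + 1), ∑ n1 ∈ range (M + 1), ∑ L ∈ range (M + 1),
        (if m + n1 + L ≤ M then
          (((3 * L).choose m : ℤ) * ((L + n1 / 2).choose (n1 / 2) : ℤ) *
            ((L + (M - L - m - n1) / 2).choose ((M - L - m - n1) / 2) : ℤ))
        else 0) := by
  refine Finset.sum_congr rfl fun m hm => Finset.sum_congr rfl fun n1 hn1 => ?_
  simp only [mem_range] at hm hn1
  by_cases hK : m + n1 ≤ M
  · set K := M - m - n1 with hKdef
    have hgL : ∀ n2, (m + n1 + n2 ≤ M) = (n2 ≤ K) := fun n2 => propext (by omega)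
    -- LHS to unguarded range (K+1)
    have l1 : (∑ n2 ∈ range (M + 1),
        (if m + n1 + n2 ≤ M then
          ((3 * (M - m - n1 - n2)).choose m : ℤ) *
            (((M - m - n1 - n2) + n1 / 2).choose (n1 / 2) : ℤ) *
            (((M - m - n1 - n2) + n2 / 2).choose (n2 / 2) : ℤ)
        else 0)) =
        ∑ n2 ∈ range (K + 1),
          (((3 * (M - m - n1 - n2)).choose m : ℤ) *
            (((M - m - n1 - n2) + n1 / 2).choose (n1 / 2) : ℤ) *
            (((M - m - n1 - n2) + n2 / 2).choose (n2 / 2) : ℤ)) := by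
      rw [← sum_range_guard _ (by omega : K ≤ M)]
      exact Finset.sum_congr rfl fun n2 _ => if_congr (by omega) rfl rfl
    have l2 : (∑ L ∈ range (M + 1),
        (if m + n1 + L ≤ M then
          (((3 * L).choose m : ℤ) * ((L + n1 / 2).choose (n1 / 2) : ℤ) *
            ((L + (M - L - m - n1) / 2).choose ((M - L - m - n1) / 2) : ℤ))
        else 0)) =
        ∑ L ∈ range (K + 1),
          (((3 * L).choose m : ℤ) * ((L + n1 / 2).choose (n1 / 2) : ℤ) *
            ((L + (M - L - m - n1) / 2).choose ((M - L - m - n1) / 2) : ℤ)) := by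
      rw [← sum_range_guard _ (by omega : K ≤ M)]
      exact Finset.sum_congr rfl fun L _ => if_congr (by omega) rfl rfl
    rw [l1, l2]
    rw [← Finset.sum_range_reflect]
    refine Finset.sum_congr rfl fun L hL => ?_
    simp only [mem_range] at hL
    have e1 : K + 1 - 1 - L = K - L := by omega
    rw [e1]
    have e2 : M - m - n1 - (K - L) = L := by omega
    have e3 : M - L - m - n1 = K - L := by omega
    rw [e2, e3]
  · have z1 : ∀ n2 ∈ range (M + 1), (if m + n1 + n2 ≤ M then
        ((3 * (M - m - n1 - n2)).choose m : ℤ) *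
          (((M - m - n1 - n2) + n1 / 2).choose (n1 / 2) : ℤ) *
          (((M - m - n1 - n2) + n2 / 2).choose (n2 / 2) : ℤ) else 0) = 0 :=
      fun n2 _ => by rw [if_neg (by omega)]
    have z2 : ∀ L ∈ range (M + 1), (if m + n1 + L ≤ M then
        (((3 * L).choose m : ℤ) * ((L + n1 / 2).choose (n1 / 2) : ℤ) *
          ((L + (M - L - m - n1) / 2).choose ((M - L - m - n1) / 2) : ℤ)) else 0) = 0 :=
      fun L _ => by rw [if_neg (by omega)]
    rw [Finset.sum_congr rfl z1, Finset.sum_congr rfl z2]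

end

end SchurQAux

theorem schur_q_eq_one_identity (M : ℕ) :
    ∑ m ∈ range (M + 1), ∑ n1 ∈ range (M + 1), ∑ n2 ∈ range (M + 1),
      (if m + n1 + n2 ≤ M then
        Nat.choose (3 * (M - m - n1 - n2)) m *
          Nat.choose (M - m - n1 - n2 + n1 / 2) (n1 / 2) *
          Nat.choose (M - m - n1 - n2 + n2 / 2) (n2 / 2)
      else 0) = 3 ^ M := by
  have key : ((∑ m ∈ range (M + 1), ∑ n1 ∈ range (M + 1), ∑ n2 ∈ range (M + 1),
      (if m + n1 + n2 ≤ M then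
        Nat.choose (3 * (M - m - n1 - n2)) m *
          Nat.choose (M - m - n1 - n2 + n1 / 2) (n1 / 2) *
          Nat.choose (M - m - n1 - n2 + n2 / 2) (n2 / 2)
      else 0) : ℕ) : ℤ) = 3 ^ M := by
    push_cast
    rw [SchurQAux.triple_reindex M, ← SchurQAux.coeff_G_eq_triple M,
      SchurQAux.coeff_G_diag M]
  exact_mod_cast key
end

section
/- For every nonnegative integer M, the quadruple sum over nonnegative integers N, m, n1, n2 of C(M,N) * C(3(N-m-n1-n2), m) * C(N-m-n1-n2 + floor(n1/2), floor(n1/2)) * C(N-m-n1-n2 + floor(n2/2), floor(n2/2)) equals 4^M. -/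
open Finset PowerSeries

/-! Auxiliary development: the inner triple sum equals `3 ^ N`, proved by a
generating-function argument in `PowerSeries ℤ`. -/

noncomputable def i2 : PowerSeries ℤ := PowerSeries.mk fun n => if Even n then 1 else 0

lemma i2_inv : ((1 : PowerSeries ℤ) - X ^ 2) * i2 = 1 := by
  ext n
  rw [sub_mul, one_mul, map_sub, coeff_X_pow_mul']
  rcases n with _ | _ | n
  · simp [i2]
  · simp [i2, Nat.even_add_one]
  · simp only [i2, coeff_mk, show 2 ≤ n + 2 by omega, if_true, coeff_one,
      Nat.add_sub_cancel]
    have : Even (n + 2) ↔ Even n := by simp [Nat.even_add]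
    rcases Nat.even_or_odd n with h | h <;>
      simp [this, h, Nat.even_add_one, Nat.even_iff, Nat.odd_iff] at *

lemma hockey (k h : ℕ) :
    ∑ j ∈ range (2 * h + 1), (if Even j then ((k + j / 2).choose (j / 2) : ℤ) else 0)
      = (k + 1 + h).choose h := by
  induction h with
  | zero => simp
  | succ h ih =>
    rw [show 2 * (h + 1) + 1 = (2 * h + 1) + 1 + 1 by ring, sum_range_succ, sum_range_succ, ih]
    have h1 : ¬ Even (2 * h + 1) := by simp [Nat.even_add_one]
    have h2 : Even (2 * h + 1 + 1) := ⟨h + 1, by ring⟩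
    rw [if_neg h1, if_pos h2]
    have h3 : (2 * h + 1 + 1) / 2 = h + 1 := by omega
    rw [h3]
    have h4 : (k + 1 + (h + 1)).choose (h + 1)
        = (k + 1 + h).choose h + (k + 1 + h).choose (h + 1) := by
      rw [show k + 1 + (h + 1) = (k + 1 + h) + 1 by ring, Nat.choose_succ_succ']
    rw [show k + (h + 1) = k + 1 + h by ring]
    push_cast [h4]
    ring

lemma coeff_i2_pow (k n : ℕ) :
    (PowerSeries.coeff (R := ℤ) n) (i2 ^ (k + 1)) =
      if Even n then ((k + n / 2).choose (n / 2) : ℤ) else 0 := by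
  induction k generalizing n with
  | zero => simp [i2]
  | succ k ih =>
    rw [pow_succ, coeff_mul, Finset.Nat.sum_antidiagonal_eq_sum_range_succ_mk]
    simp only [ih]
    simp only [i2, coeff_mk]
    rcases Nat.even_or_odd n with hn | hn
    · rw [if_pos hn]
      have hsum : ∀ j ∈ range (n + 1),
          (if Even j then ((k + j / 2).choose (j / 2) : ℤ) else 0) *
            (if Even (n - j) then (1 : ℤ) else 0)
          = if Even j then ((k + j / 2).choose (j / 2) : ℤ) else 0 := by
        intro j hj
        simp only [mem_range] at hj
        rcases Nat.even_or_odd j with hj2 | hj2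
        · have : Even (n - j) := by
            rw [Nat.even_sub (by omega)]
            simp [hj2, hn]
          simp [hj2, this]
        · simp [Nat.not_even_iff_odd.mpr hj2]
      rw [Nat.succ_eq_add_one, Finset.sum_congr rfl hsum,
        show n + 1 = 2 * (n / 2) + 1 by have := Nat.even_iff.mp hn; omega, hockey]
    · rw [if_neg (Nat.not_even_iff_odd.mpr hn)]
      apply Finset.sum_eq_zero
      intro j hj
      simp only [mem_range] at hj
      rcases Nat.even_or_odd j with hj2 | hj2
      · have : ¬ Even (n - j) := by
          rw [Nat.even_sub (by omega)]
          simp [hj2, Nat.not_even_iff_odd.mpr hn]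
        simp [this]
      · simp [Nat.not_even_iff_odd.mpr hj2]

lemma coeff_q (k n : ℕ) :
    (PowerSeries.coeff (R := ℤ) n) ((1 + X) * i2 ^ (k + 1)) = ((k + n / 2).choose (n / 2) : ℤ) := by
  rw [add_mul, one_mul, map_add]
  rcases n with _ | n
  · simp [coeff_i2_pow]
  · rw [coeff_succ_X_mul, coeff_i2_pow, coeff_i2_pow]
    rcases Nat.even_or_odd n with hn | hn
    · have h1 : ¬ Even (n + 1) := by simp [Nat.even_add_one, hn]
      have h2 : (n + 1) / 2 = n / 2 := by have := Nat.even_iff.mp hn; omega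
      simp [h1, hn, h2]
    · have h1 : Even (n + 1) := by simp [Nat.even_add_one, Nat.not_even_iff_odd.mpr hn]
      simp [h1, Nat.not_even_iff_odd.mpr hn]

lemma coeff_one_add_X_pow (m n : ℕ) :
    (PowerSeries.coeff (R := ℤ) n) ((1 + X) ^ m) = (m.choose n : ℤ) := by
  induction m generalizing n with
  | zero => rcases n with _ | n <;> simp
  | succ m ih =>
    rw [pow_succ, mul_add, mul_one, map_add]
    rcases n with _ | n
    · simp [ih]
    · rw [mul_comm, coeff_succ_X_mul, ih, ih, Nat.choose_succ_succ]
      push_cast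
      ring

noncomputable def F (N : ℕ) : PowerSeries ℤ :=
  ∑ k ∈ range (N + 1), X ^ k * ((1 + X) ^ (3 * k + 2) * i2 ^ (2 * k + 2))

lemma star (N : ℕ) :
    ((1 : PowerSeries ℤ) - 3 * X) * F N
      = 1 - X ^ (N + 1) * ((1 + X) ^ (3 * N + 3) * i2 ^ (2 * N + 2)) := by
  induction N with
  | zero =>
    have h0 : F 0 = (1 + X) ^ 2 * i2 ^ 2 := by rw [F]; simp
    rw [h0]
    linear_combination (i2 * ((1 : PowerSeries ℤ) - X ^ 2) + 1) * i2_inv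
  | succ N ih =>
    have hF : F (N + 1)
        = F N + X ^ (N + 1) * ((1 + X) ^ (3 * (N + 1) + 2) * i2 ^ (2 * (N + 1) + 2)) := by
      rw [F, sum_range_succ]; rfl
    rw [hF]
    linear_combination ih + X ^ (N + 1) * (1 + X) ^ (3 * N + 3) * i2 ^ (2 * N + 2) *
      (i2 * ((1 : PowerSeries ℤ) - X ^ 2) + 1) * i2_inv

lemma collapse (N c : ℕ) (h : ℕ → ℤ) :
    ∑ x ∈ range (N + 1), (if c + x = N then h x else 0)
      = if c ≤ N then h (N - c) else 0 := by
  rcases le_or_gt c N with hc | hc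
  · rw [Finset.sum_congr rfl (g := fun x => if x = N - c then h x else 0)
      (fun x hx => by simp only [mem_range] at hx; exact if_congr (by omega) rfl rfl)]
    rw [Finset.sum_ite_eq' (range (N + 1)) (N - c) h, if_pos hc,
      if_pos (by simp only [mem_range]; omega)]
  · rw [if_neg (by omega)]
    apply Finset.sum_eq_zero
    intro x _
    rw [if_neg (by omega)]

lemma truncate (N c : ℕ) (h : ℕ → ℤ) :
    ∑ x ∈ range (N + 1), (if c + x ≤ N then h x else 0)
      = ∑ x ∈ range (N + 1 - c), h x := by
  rw [← Finset.sum_subset (s₁ := range (N + 1 - c))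
    (by intro x hx; simp only [mem_range] at *; omega)
    (by intro x _ hx; simp only [mem_range] at hx; rw [if_neg (by omega)])]
  exact Finset.sum_congr rfl fun x hx => if_pos (by simp only [mem_range] at hx; omega)

/-- the integer-valued summand -/
def g (k m n1 n2 : ℕ) : ℤ :=
  ((3 * k).choose m : ℤ) * ((k + n1 / 2).choose (n1 / 2) : ℤ) *
    ((k + n2 / 2).choose (n2 / 2) : ℤ)

/-- the canonical 4-fold sum -/
noncomputable def C4 (N : ℕ) : ℤ :=
  ∑ k ∈ range (N + 1), ∑ m ∈ range (N + 1), ∑ n1 ∈ range (N + 1), ∑ n2 ∈ range (N + 1),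
    if k + m + n1 + n2 = N then g k m n1 n2 else 0

lemma coeff_F_eq_C4 (N : ℕ) : (PowerSeries.coeff (R := ℤ) N) (F N) = C4 N := by
  rw [F, map_sum, C4]
  apply Finset.sum_congr rfl
  intro k hk
  simp only [mem_range] at hk
  have hkN : k ≤ N := by omega
  -- coefficient side
  rw [coeff_X_pow_mul', if_pos hkN]
  have hw : (1 + X : PowerSeries ℤ) ^ (3 * k + 2) * i2 ^ (2 * k + 2)
      = (1 + X) ^ (3 * k) * (((1 + X) * i2 ^ (k + 1)) * ((1 + X) * i2 ^ (k + 1))) := by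
    ring
  rw [hw, coeff_mul, Finset.Nat.sum_antidiagonal_eq_sum_range_succ_mk]
  -- combinatorial side: collapse n2, truncate n1, truncate m
  have step1 : ∀ m n1 : ℕ,
      ∑ n2 ∈ range (N + 1), (if k + m + n1 + n2 = N then g k m n1 n2 else 0)
        = if k + m + n1 ≤ N then g k m n1 (N - (k + m + n1)) else 0 := by
    intro m n1
    exact collapse N (k + m + n1) (fun n2 => g k m n1 n2)
  have step2 : ∀ m : ℕ,
      ∑ n1 ∈ range (N + 1), (if k + m + n1 ≤ N then g k m n1 (N - (k + m + n1)) else 0)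
        = ∑ n1 ∈ range (N + 1 - (k + m)), g k m n1 (N - (k + m + n1)) := by
    intro m
    have := truncate N (k + m) (fun n1 => g k m n1 (N - (k + m + n1)))
    simpa [add_assoc] using this
  have hRHS : (∑ m ∈ range (N + 1), ∑ n1 ∈ range (N + 1), ∑ n2 ∈ range (N + 1),
      if k + m + n1 + n2 = N then g k m n1 n2 else 0)
      = ∑ m ∈ range (N + 1), ∑ n1 ∈ range (N + 1 - (k + m)), g k m n1 (N - (k + m + n1)) :=
    Finset.sum_congr rfl fun m _ => by
      rw [Finset.sum_congr rfl (fun n1 _ => step1 m n1), step2 m]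
  rw [hRHS]
  -- shrink the m-range on the RHS
  rw [← Finset.sum_subset (s₁ := range (N - k + 1)) (s₂ := range (N + 1))
    (by intro x hx; simp only [mem_range] at *; omega)
    (by
      intro m _ hm
      simp only [mem_range] at hm
      have : N + 1 - (k + m) = 0 := by omega
      rw [this]
      simp)]
  apply Finset.sum_congr rfl
  intro m hm
  simp only [mem_range] at hm
  rw [coeff_one_add_X_pow, coeff_mul, Finset.Nat.sum_antidiagonal_eq_sum_range_succ_mk]
  dsimp only
  simp only [Nat.succ_eq_add_one]
  have hrange : N - k - m + 1 = N + 1 - (k + m) := by omega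
  rw [hrange, Finset.mul_sum]
  apply Finset.sum_congr rfl
  intro n1 hn1
  simp only [mem_range] at hn1
  rw [coeff_q, coeff_q, g]
  have harg : N - k - m - n1 = N - (k + m + n1) := by omega
  rw [harg]
  ring

lemma C4_eq_triple (N : ℕ) :
    C4 N = ∑ m ∈ range (N + 1), ∑ n1 ∈ range (N + 1), ∑ n2 ∈ range (N + 1),
      (if m + n1 + n2 ≤ N then g (N - m - n1 - n2) m n1 n2 else 0) := by
  rw [C4, Finset.sum_comm]
  apply Finset.sum_congr rfl
  intro m _
  rw [Finset.sum_comm]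
  apply Finset.sum_congr rfl
  intro n1 _
  rw [Finset.sum_comm]
  apply Finset.sum_congr rfl
  intro n2 _
  have h1 : ∀ k ∈ range (N + 1),
      (if k + m + n1 + n2 = N then g k m n1 n2 else 0)
        = if (m + n1 + n2) + k = N then g k m n1 n2 else 0 := by
    intro k _
    exact if_congr (by omega) rfl rfl
  rw [Finset.sum_congr rfl h1, collapse N (m + n1 + n2) (fun k => g k m n1 n2)]
  have : N - (m + n1 + n2) = N - m - n1 - n2 := by omega
  rw [this]

lemma coeff_F_stable (j N : ℕ) (hj : j ≤ N) :
    (PowerSeries.coeff (R := ℤ) j) (F N) = (PowerSeries.coeff (R := ℤ) j) (F j) := by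
  rw [F, F, map_sum, map_sum]
  rw [← Finset.sum_subset (s₁ := range (j + 1)) (s₂ := range (N + 1))
    (by intro x hx; simp only [mem_range] at *; omega)
    (by
      intro k _ hk
      simp only [mem_range] at hk
      rw [coeff_X_pow_mul', if_neg (by omega)])]

lemma C4_succ (N : ℕ) : C4 (N + 1) = 3 * C4 N := by
  have h := congrArg (PowerSeries.coeff (R := ℤ) (N + 1)) (star (N + 1))
  have hC3 : (PowerSeries.C (R := ℤ) 3 : PowerSeries ℤ) = 3 := by
    simp [map_ofNat]
  have hexp : ((1 : PowerSeries ℤ) - 3 * X) * F (N + 1)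
      = F (N + 1) - PowerSeries.C (R := ℤ) 3 * (X * F (N + 1)) := by
    rw [hC3]; ring
  rw [hexp, map_sub, map_sub, coeff_one, if_neg (by omega),
    coeff_X_pow_mul', if_neg (by omega), PowerSeries.coeff_C_mul,
    coeff_succ_X_mul, coeff_F_stable N (N + 1) (by omega),
    coeff_F_eq_C4, coeff_F_eq_C4] at h
  linarith

lemma C4_zero : C4 0 = 1 := by
  have h := congrArg (PowerSeries.coeff (R := ℤ) 0) (star 0)
  have hC3 : (PowerSeries.C (R := ℤ) 3 : PowerSeries ℤ) = 3 := by
    simp [map_ofNat]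
  have hexp : ((1 : PowerSeries ℤ) - 3 * X) * F 0
      = F 0 - PowerSeries.C (R := ℤ) 3 * (X * F 0) := by
    rw [hC3]; ring
  rw [hexp, map_sub, map_sub, coeff_one, if_pos rfl,
    coeff_X_pow_mul', if_neg (by omega), PowerSeries.coeff_C_mul,
    PowerSeries.coeff_zero_X_mul, coeff_F_eq_C4] at h
  linarith

lemma C4_eq_pow (N : ℕ) : C4 N = 3 ^ N := by
  induction N with
  | zero => simpa using C4_zero
  | succ N ih => rw [C4_succ, ih]; ring

lemma inner_eq (N : ℕ) :
    (∑ m ∈ range (N + 1), ∑ n1 ∈ range (N + 1), ∑ n2 ∈ range (N + 1),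
      (if m + n1 + n2 ≤ N then
        Nat.choose (3 * (N - m - n1 - n2)) m *
          Nat.choose (N - m - n1 - n2 + n1 / 2) (n1 / 2) *
          Nat.choose (N - m - n1 - n2 + n2 / 2) (n2 / 2)
      else 0)) = 3 ^ N := by
  have h := (C4_eq_triple N).symm.trans (C4_eq_pow N)
  have hcast : ((∑ m ∈ range (N + 1), ∑ n1 ∈ range (N + 1), ∑ n2 ∈ range (N + 1),
      (if m + n1 + n2 ≤ N then
        Nat.choose (3 * (N - m - n1 - n2)) m *
          Nat.choose (N - m - n1 - n2 + n1 / 2) (n1 / 2) *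
          Nat.choose (N - m - n1 - n2 + n2 / 2) (n2 / 2)
      else 0) : ℕ) : ℤ)
      = ∑ m ∈ range (N + 1), ∑ n1 ∈ range (N + 1), ∑ n2 ∈ range (N + 1),
        (if m + n1 + n2 ≤ N then g (N - m - n1 - n2) m n1 n2 else 0) := by
    push_cast [g]
    rfl
  have := hcast.trans h
  exact_mod_cast this

theorem schur_q_eq_one_identity_four (M : ℕ) :
    ∑ N ∈ range (M + 1), ∑ m ∈ range (N + 1), ∑ n1 ∈ range (N + 1), ∑ n2 ∈ range (N + 1),
      (if m + n1 + n2 ≤ N then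
        Nat.choose M N *
          Nat.choose (3 * (N - m - n1 - n2)) m *
          Nat.choose (N - m - n1 - n2 + n1 / 2) (n1 / 2) *
          Nat.choose (N - m - n1 - n2 + n2 / 2) (n2 / 2)
      else 0) = 4 ^ M := by
  have key : ∀ N ∈ range (M + 1),
      (∑ m ∈ range (N + 1), ∑ n1 ∈ range (N + 1), ∑ n2 ∈ range (N + 1),
        (if m + n1 + n2 ≤ N then
          Nat.choose M N *
            Nat.choose (3 * (N - m - n1 - n2)) m *
            Nat.choose (N - m - n1 - n2 + n1 / 2) (n1 / 2) *
            Nat.choose (N - m - n1 - n2 + n2 / 2) (n2 / 2)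
        else 0)) = Nat.choose M N * 3 ^ N := by
    intro N _
    rw [← inner_eq N]
    simp only [Finset.mul_sum]
    apply Finset.sum_congr rfl; intro m _
    apply Finset.sum_congr rfl; intro n1 _
    apply Finset.sum_congr rfl; intro n2 _
    split
    · ring
    · ring
  rw [Finset.sum_congr rfl key, show (4 : ℕ) = 3 + 1 by norm_num, add_pow]
  apply Finset.sum_congr rfl
  intro N _
  simp [mul_comm]
end

section
/- Define the q-trinomial coefficient ⟨m; b; q | a⟩₂ := Σ_{k≥0} q^{k(k+b)} · [m choose k]_q · [m-k choose k+a]_q (Gaussian binomials in q), and define R_N(q) := Σ_{j=-N}^{N} q^{j(3j-1)/2} · ⟨N; j; q³ | j⟩₂. Then for all N ≥ 2, R_N(q) = (1 + q^{3N-2} + q^{3N-1})·R_{N-1}(q) + q^{3N-3}·(1 - q^{3N-3})·R_{N-2}(q) as polynomials in q. -/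
open Finset Polynomial

/-- The Gaussian (q-)binomial coefficient `[n choose k]_q` as a polynomial in `q`,
defined by the q-Pascal recurrence.  It vanishes when `k > n`. -/
noncomputable def qbinom : ℕ → ℕ → Polynomial ℤ
  | _, 0 => 1
  | 0, _ + 1 => 0
  | n + 1, k + 1 => qbinom n k + Polynomial.X ^ (k + 1) * qbinom n (k + 1)


lemma qbinom_zero (n : ℕ) : qbinom n 0 = 1 := by cases n <;> rfl

lemma qbinom_succ (n k : ℕ) :
    qbinom (n+1) (k+1) = qbinom n k + X ^ (k + 1) * qbinom n (k + 1) := rfl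

lemma qbinom_eq_zero : ∀ {n k : ℕ}, n < k → qbinom n k = 0 := by
  intro n
  induction n with
  | zero => intro k hk; match k, hk with | k+1, _ => rfl
  | succ n ih =>
    intro k hk
    match k, hk with
    | k+1, hk =>
      rw [qbinom_succ, ih (by omega), ih (by omega)]
      ring

lemma qbinom_diag : ∀ n : ℕ, qbinom n n = 1 := by
  intro n
  induction n with
  | zero => rfl
  | succ n ih => rw [qbinom_succ, ih, qbinom_eq_zero (by omega)]; ring

lemma qbinom_pascal' : ∀ (n k : ℕ),
    qbinom (n+1) (k+1) = qbinom n (k+1) + X ^ (n - k) * qbinom n k := by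
  intro n
  induction n with
  | zero =>
    intro k
    cases k with
    | zero => simp [qbinom_succ, qbinom_zero, qbinom_eq_zero]
    | succ k =>
      rw [qbinom_succ, qbinom_eq_zero (show 0 < k+1 by omega),
        qbinom_eq_zero (show 0 < k+2 by omega)]
      ring
  | succ n ih =>
    intro k
    cases k with
    | zero =>
      conv_lhs => rw [qbinom_succ, ih 0]
      conv_rhs => rw [qbinom_succ]
      rw [qbinom_zero, qbinom_zero, Nat.sub_zero, Nat.sub_zero]
      ring
    | succ k =>
      rcases lt_or_ge k n with h | h
      · conv_lhs => rw [qbinom_succ, ih k, ih (k+1)]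
        conv_rhs => rw [qbinom_succ n (k+1), qbinom_succ n k]
        have e1 : n + 1 - (k + 1) = n - k := by omega
        rw [e1]
        have hx : (X:ℤ[X])^(k+2) * X^(n-(k+1)) = X^(n-k) * X^(k+1) := by
          rw [← pow_add, ← pow_add]; congr 1; omega
        linear_combination (qbinom n (k+1)) * hx
      · rcases eq_or_lt_of_le h with rfl | h2
        · rw [qbinom_diag, qbinom_eq_zero (show n+1 < n+1+1 by omega), qbinom_diag,
            show n+1-(n+1) = 0 by omega]
          ring
        · rw [qbinom_eq_zero (show n+1 < k+1 by omega),
            qbinom_eq_zero (show n+1 < k+2 by omega),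
            qbinom_eq_zero (show n+1+1 < k+1+1 by omega)]
          ring

/-- The round q-trinomial coefficient `⟨m; b; q | a⟩₂ = Σ_k q^{k(k+b)} [m choose k]_q
[m-k choose k+a]_q` (terms with `k + a < 0` vanish). -/
noncomputable def qtrinom (m : ℕ) (b a : ℤ) : Polynomial ℤ :=
  ∑ k ∈ range (m + 1),
    if 0 ≤ (k : ℤ) + a ∧ 0 ≤ (k : ℤ) * ((k : ℤ) + b) then
      Polynomial.X ^ (((k : ℤ) * ((k : ℤ) + b)).toNat) * qbinom m k *
        qbinom (m - k) (((k : ℤ) + a).toNat)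
    else 0

/-- `R_N(q) = Σ_{j=-N}^N q^{j(3j-1)/2} ⟨N; j; q³ | j⟩₂`. -/
noncomputable def schurR (N : ℕ) : Polynomial ℤ :=
  ∑ j ∈ Finset.Icc (-(N : ℤ)) (N : ℤ),
    Polynomial.X ^ ((j * (3 * j - 1) / 2).toNat) * (qtrinom N j j).comp (Polynomial.X ^ 3)


lemma qbinom_AB : ∀ n : ℕ,
    (∀ k, (1 - X^(k+1)) * qbinom (n+1) (k+1) = (1 - X^(n+1)) * qbinom n k) ∧
    (∀ k, (1 - X^(n+1-k)) * qbinom (n+1) k = (1 - X^(n+1)) * qbinom n k) := by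
  intro n
  induction n with
  | zero =>
    constructor
    · intro k
      cases k with
      | zero => rw [qbinom_succ, qbinom_zero, qbinom_eq_zero (by omega)]; ring
      | succ k =>
        rw [qbinom_eq_zero (show 1 < k+2 by omega), qbinom_eq_zero (show 0 < k+1 by omega)]
        ring
    · intro k
      match k with
      | 0 => rw [qbinom_zero, qbinom_zero]
      | 1 => rw [show 1-1 = 0 by omega, qbinom_eq_zero (show 0 < 1 by omega)]; ring
      | (k+2) =>
        rw [qbinom_eq_zero (show 1 < k+2 by omega), qbinom_eq_zero (show 0 < k+2 by omega)]
        ring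
  | succ n ih =>
    obtain ⟨ihA, ihB⟩ := ih
    constructor
    · intro k
      rcases le_or_gt k n with h | h
      · rw [qbinom_pascal' (n+1) k]
        have hA := ihA k
        have hB := ihB k
        have hx : (X:ℤ[X])^(n+1-k) * X^(k+1) = X^(n+1+1) := by
          rw [← pow_add]; congr 1; omega
        linear_combination hA - hB - (qbinom (n+1) k) * hx
      · rcases eq_or_lt_of_le (show n+1 ≤ k by omega) with rfl | h2
        · rw [qbinom_diag, qbinom_diag]
        · rw [qbinom_eq_zero (show n+1+1 < k+1 by omega),
            qbinom_eq_zero (show n+1 < k by omega)]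
          ring
    · intro k
      match k with
      | 0 => simp [qbinom_zero]
      | (k'+1) =>
        rcases le_or_gt k' n with h | h
        · rw [show n+1+1-(k'+1) = n+1-k' by omega, qbinom_pascal' (n+1) k']
          have hA := ihA k'
          have hB := ihB k'
          have hx : (X:ℤ[X])^(n+1-k') * X^(k'+1) = X^(n+1+1) := by
            rw [← pow_add]; congr 1; omega
          linear_combination (X:ℤ[X])^(n+1-k') * hB - (X:ℤ[X])^(n+1-k') * hA
            - (qbinom (n+1) (k'+1)) * hx
        · rcases eq_or_lt_of_le (show n+1 ≤ k' by omega) with rfl | h2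
          · rw [show n+1+1-(n+1+1) = 0 by omega, qbinom_eq_zero (show n+1 < n+1+1 by omega)]
            ring
          · rw [qbinom_eq_zero (show n+1+1 < k'+1 by omega),
              qbinom_eq_zero (show n+1 < k'+1 by omega)]
            ring

lemma qbinom_lemA (n k : ℕ) :
    (1 - X^(k+1)) * qbinom (n+1) (k+1) = (1 - X^(n+1)) * qbinom n k :=
  (qbinom_AB n).1 k

lemma qbinom_lemB (n k : ℕ) :
    (1 - X^(n+1-k)) * qbinom (n+1) k = (1 - X^(n+1)) * qbinom n k :=
  (qbinom_AB n).2 k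

noncomputable def Bq (n k : ℕ) : Polynomial ℤ := (qbinom n k).comp (X^3)

lemma Bq_zero (n : ℕ) : Bq n 0 = 1 := by simp [Bq, qbinom_zero]

lemma Bq_eq_zero {n k : ℕ} (h : n < k) : Bq n k = 0 := by simp [Bq, qbinom_eq_zero h]

lemma Bq_succ (n k : ℕ) : Bq (n+1) (k+1) = Bq n k + X^(3*(k+1)) * Bq n (k+1) := by
  unfold Bq
  rw [qbinom_succ, add_comp, mul_comp, X_pow_comp, ← pow_mul, mul_comm 3]

lemma Bq_pascal' (n k : ℕ) : Bq (n+1) (k+1) = Bq n (k+1) + X^(3*(n-k)) * Bq n k := by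
  unfold Bq
  rw [qbinom_pascal' n k, add_comp, mul_comp, X_pow_comp, ← pow_mul, mul_comm 3]

lemma Bq_lemA (n k : ℕ) :
    (1 - X^(3*(k+1))) * Bq (n+1) (k+1) = (1 - X^(3*(n+1))) * Bq n k := by
  have h := congrArg (fun p => p.comp ((X:Polynomial ℤ)^3)) (qbinom_lemA n k)
  simpa [Bq, mul_comp, sub_comp, one_comp, X_pow_comp, ← pow_mul, mul_comm 3] using h

lemma Bq_lemB (n k : ℕ) :
    (1 - X^(3*(n+1-k))) * Bq (n+1) k = (1 - X^(3*(n+1))) * Bq n k := by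
  have h := congrArg (fun p => p.comp ((X:Polynomial ℤ)^3)) (qbinom_lemB n k)
  simpa [Bq, mul_comp, sub_comp, one_comp, X_pow_comp, ← pow_mul, mul_comm 3] using h

/-- `Sq m c δ a = X^c · (qtrinom m (a+δ) a).comp (X^3)`, in expanded form. -/
noncomputable def Sq (m c δ : ℕ) (a : ℤ) : Polynomial ℤ :=
  ∑ k ∈ range (m+1),
    if 0 ≤ (k:ℤ) + a then
      X ^ (c + 3 * (((k:ℤ) * ((k:ℤ) + a + (δ:ℤ))).toNat)) * Bq m k *
        Bq (m-k) (((k:ℤ)+a).toNat)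
    else 0

lemma Sq_scale (e m c δ : ℕ) (a : ℤ) : X^e * Sq m c δ a = Sq m (e+c) δ a := by
  unfold Sq
  rw [Finset.mul_sum]
  refine Finset.sum_congr rfl fun k _ => ?_
  rw [mul_ite, mul_zero]
  congr 1
  rw [← mul_assoc, ← mul_assoc, ← pow_add, ← add_assoc]

lemma Sq_support {m : ℕ} {a : ℤ} (h : (m:ℤ) < a ∨ a + m < 0) (c δ : ℕ) :
    Sq m c δ a = 0 := by
  unfold Sq
  refine Finset.sum_eq_zero fun k hk => ?_
  have hk' : k ≤ m := Nat.lt_succ_iff.mp (Finset.mem_range.mp hk)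
  rcases h with h | h
  · have hb : m - k < (((k:ℤ)+a).toNat) := by omega
    split
    · rw [Bq_eq_zero hb, mul_zero]
    · rfl
  · rw [if_neg (by omega)]

def Pw (j : ℤ) : ℕ := (j*(3*j-1)/2).toNat

lemma Pw_aux (j : ℤ) : 0 ≤ j*(3*j-1) := by
  rcases le_or_gt 1 j with h | h
  · exact mul_nonneg (by linarith) (by linarith)
  · have := mul_nonneg (a := -j) (b := -(3*j-1)) (by linarith) (by linarith)
    nlinarith [this]

lemma Pw_two_dvd (j : ℤ) : 2 ∣ j*(3*j-1) := by
  rcases Int.even_or_odd j with ⟨t, ht⟩ | ⟨t, ht⟩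
  · exact ⟨t*(3*j-1), by rw [ht]; ring⟩
  · exact ⟨j*(3*t+1), by rw [ht]; ring⟩

lemma Pw_cast (j : ℤ) : (Pw j : ℤ) = j*(3*j-1)/2 :=
  Int.toNat_of_nonneg (Int.ediv_nonneg (Pw_aux j) (by norm_num))

lemma Pw_mul2 (j : ℤ) : 2 * ((Pw j : ℤ)) = j*(3*j-1) := by
  rw [Pw_cast, Int.mul_ediv_cancel' (Pw_two_dvd j)]

lemma Pw_succ (j : ℤ) : (Pw (j+1) : ℤ) = (Pw j : ℤ) + 3*j + 1 := by
  have h1 := Pw_mul2 j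
  have h2 := Pw_mul2 (j+1)
  have h3 : (j+1)*(3*(j+1)-1) = j*(3*j-1) + (6*j+2) := by ring
  omega

lemma schurR_eq (N : ℕ) :
    schurR N = ∑ j ∈ Finset.Icc (-(N:ℤ)) (N:ℤ), Sq N (Pw j) 0 j := by
  unfold schurR Sq
  refine Finset.sum_congr rfl fun j hj => ?_
  rw [qtrinom]
  have hcond : ∀ k ∈ range (N+1),
      (if 0 ≤ (k:ℤ) + j ∧ 0 ≤ (k:ℤ)*((k:ℤ)+j) then
        X ^ (((k:ℤ)*((k:ℤ)+j)).toNat) * qbinom N k * qbinom (N-k) (((k:ℤ)+j).toNat)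
      else 0)
      = (if 0 ≤ (k:ℤ)+j then
        X ^ (((k:ℤ)*((k:ℤ)+j)).toNat) * qbinom N k * qbinom (N-k) (((k:ℤ)+j).toNat)
      else 0) := by
    intro k _
    by_cases h : 0 ≤ (k:ℤ)+j
    · rw [if_pos ⟨h, mul_nonneg (by positivity) h⟩, if_pos h]
    · rw [if_neg (fun hc => h hc.1), if_neg h]
  rw [Finset.sum_congr rfl hcond]
  simp only [Polynomial.comp, eval₂_finset_sum, Finset.mul_sum]
  refine Finset.sum_congr rfl fun k _ => ?_
  simp only [Nat.cast_zero, add_zero, apply_ite (eval₂ C ((X:Polynomial ℤ)^3)),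
    eval₂_zero, mul_ite, mul_zero]
  by_cases h : 0 ≤ (k:ℤ)+j
  · rw [if_pos h, if_pos h]
    simp only [eval₂_mul, eval₂_X_pow, Bq, Polynomial.comp, Pw]
    rw [← pow_mul, ← mul_assoc, ← mul_assoc, ← pow_add, mul_comm 3]
  · rw [if_neg h, if_neg h]

lemma PJ2 (m : ℕ) (j : ℤ) (c1 c2 : ℕ) (h2 : (c2:ℤ) = (c1:ℤ) + 3*j) :
    Sq (m+1) c1 0 j = Sq (m+1) c2 1 j + (1 - X^(3*(m+1))) * Sq m c1 1 (j-1) := by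
  unfold Sq
  -- extend the last sum's range from m+1 to m+2 (extra term vanishes)
  have hext : (1 - X^(3*(m+1))) * ∑ k ∈ range (m+1),
      (if 0 ≤ (k:ℤ) + (j-1) then
        X ^ (c1 + 3 * (((k:ℤ) * ((k:ℤ) + (j-1) + ((1:ℕ):ℤ))).toNat)) * Bq m k *
          Bq (m-k) (((k:ℤ)+(j-1)).toNat)
      else 0)
      = ∑ k ∈ range (m+2), (1 - X^(3*(m+1))) *
      (if 0 ≤ (k:ℤ) + (j-1) then
        X ^ (c1 + 3 * (((k:ℤ) * ((k:ℤ) + (j-1) + ((1:ℕ):ℤ))).toNat)) * Bq m k *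
          Bq (m-k) (((k:ℤ)+(j-1)).toNat)
      else 0) := by
    rw [Finset.mul_sum, Finset.sum_range_succ (n := m+1)]
    have : Bq m (m+1) = 0 := Bq_eq_zero (by omega)
    split_ifs <;> simp [this]
  rw [hext, ← Finset.sum_add_distrib]
  refine Finset.sum_congr rfl fun k hk => ?_
  have hk' : k ≤ m + 1 := Nat.lt_succ_iff.mp (Finset.mem_range.mp hk)
  simp only [Nat.cast_zero, Nat.cast_one, add_zero]
  by_cases h : 0 ≤ (k:ℤ) + j
  · rcases eq_or_lt_of_le h with h0 | h1
    · -- k + j = 0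
      rw [if_pos h, if_pos h, if_neg (by omega)]
      have e1 : (k:ℤ) + j = 0 := h0.symm
      have q1 : (k:ℤ) * ((k:ℤ)+j) = 0 := by rw [e1, mul_zero]
      have q2 : (k:ℤ) * ((k:ℤ)+j+1) = k := by
        rw [show (k:ℤ)+j+1 = 1 by omega, mul_one]
      have he : c1 + 3 * (((k:ℤ) * ((k:ℤ) + j)).toNat)
          = c2 + 3 * (((k:ℤ) * ((k:ℤ) + j + 1)).toNat) := by omega
      rw [he]; ring
    · -- k + j ≥ 1
      rcases Nat.lt_or_ge k (m+1) with hkm | hkm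
      · -- k ≤ m
        rw [if_pos h, if_pos h, if_pos (by omega)]
        have hs : ((k:ℤ)+j).toNat = (((k:ℤ)+(j-1)).toNat) + 1 := by omega
        set s : ℕ := ((k:ℤ)+(j-1)).toNat with hs_def
        have q2 : 0 ≤ (k:ℤ)*((k:ℤ)+j) := mul_nonneg (by positivity) (by omega)
        have q3 : (k:ℤ) * ((k:ℤ)+j+1) = (k:ℤ)*((k:ℤ)+j) + k := by ring
        have q4 : (k:ℤ) * ((k:ℤ)+(j-1)+1) = (k:ℤ)*((k:ℤ)+j) := by ring
        have he : c2 + 3 * (((k:ℤ) * ((k:ℤ) + j + 1)).toNat)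
            = (c1 + 3 * (((k:ℤ) * ((k:ℤ) + j)).toNat)) + 3*(s+1) := by omega
        rw [he, hs, q4]
        have hmk : m - k + 1 = m + 1 - k := by omega
        have hA := Bq_lemA (m-k) s
        rw [hmk] at hA
        have hB := Bq_lemB m k
        rw [pow_add]
        linear_combination (X^(c1 + 3 * (((k:ℤ) * ((k:ℤ) + j)).toNat)) * Bq (m+1) k) * hA
          + (X^(c1 + 3 * (((k:ℤ) * ((k:ℤ) + j)).toNat)) * Bq (m-k) s) * hB
      · -- k = m+1 : everything vanishes
        have hk2 : k = m+1 := by omega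
        have hz1 : Bq (m+1-k) (((k:ℤ)+j).toNat) = 0 := by
          rw [hk2, Nat.sub_self]
          exact Bq_eq_zero (by omega)
        have hz2 : Bq m k = 0 := Bq_eq_zero (by omega)
        rw [if_pos h, if_pos h, hz1, hz2]
        split_ifs <;> ring
  · rw [if_neg h, if_neg h, if_neg (by omega)]
    ring

lemma PJ1 (m : ℕ) (j : ℤ) (c1 c2 c3 : ℕ) (h2 : (c2:ℤ) = (c1:ℤ) + 3*j)
    (h3 : (c3:ℤ) = (c1:ℤ) + 3*((m:ℤ)+1+j)) :
    Sq (m+1) c1 0 j = Sq m c1 1 (j-1) + Sq m c2 1 j + Sq m c3 0 (j+1) := by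
  have hBm1 : Bq m (m+1) = 0 := Bq_eq_zero (by omega)
  have step1 : Sq (m+1) c1 0 j
      = (∑ k ∈ range (m+2), (if 0 ≤ (k:ℤ)+j then
          X^(c1 + 3*(((k:ℤ)*((k:ℤ)+j)).toNat)) * Bq m k * Bq (m+1-k) (((k:ℤ)+j).toNat)
        else 0)) + Sq m c3 0 (j+1) := by
    unfold Sq
    simp only [Nat.cast_zero, add_zero]
    rw [Finset.sum_range_succ' _ (m+1), Finset.sum_range_succ' (n := m+1)]
    have hzero : (if 0 ≤ ((0:ℕ):ℤ)+j then
          X^(c1 + 3*((((0:ℕ):ℤ)*(((0:ℕ):ℤ)+j)).toNat)) * Bq (m+1) 0 *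
            Bq (m+1-0) ((((0:ℕ):ℤ)+j).toNat) else 0)
        = (if 0 ≤ ((0:ℕ):ℤ)+j then
          X^(c1 + 3*((((0:ℕ):ℤ)*(((0:ℕ):ℤ)+j)).toNat)) * Bq m 0 *
            Bq (m+1-0) ((((0:ℕ):ℤ)+j).toNat) else 0) := by
      rw [Bq_zero, Bq_zero]
    rw [hzero]
    have hsplit : ∀ k ∈ range (m+1),
        (if 0 ≤ ((k+1:ℕ):ℤ)+j then
          X^(c1 + 3*((((k+1:ℕ):ℤ)*(((k+1:ℕ):ℤ)+j)).toNat)) * Bq (m+1) (k+1) *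
            Bq (m+1-(k+1)) ((((k+1:ℕ):ℤ)+j).toNat)
        else 0)
        = (if 0 ≤ ((k+1:ℕ):ℤ)+j then
          X^(c1 + 3*((((k+1:ℕ):ℤ)*(((k+1:ℕ):ℤ)+j)).toNat)) * Bq m (k+1) *
            Bq (m+1-(k+1)) ((((k+1:ℕ):ℤ)+j).toNat)
        else 0)
        + (if 0 ≤ (k:ℤ)+(j+1) then
          X^(c3 + 3*(((k:ℤ)*((k:ℤ)+(j+1))).toNat)) * Bq m k *
            Bq (m-k) (((k:ℤ)+(j+1)).toNat)
        else 0) := by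
      intro k hk
      have hk' : k ≤ m := Nat.lt_succ_iff.mp (Finset.mem_range.mp hk)
      by_cases h : 0 ≤ ((k+1:ℕ):ℤ)+j
      · rw [if_pos h, if_pos h, if_pos (by push_cast at h ⊢; omega)]
        rw [Bq_pascal' m k]
        have hmk : m+1-(k+1) = m-k := by omega
        rw [hmk]
        have harg : (((k+1:ℕ):ℤ)+j).toNat = ((k:ℤ)+(j+1)).toNat := by push_cast; omega
        rw [harg]
        have q1 : ((k+1:ℕ):ℤ)*(((k+1:ℕ):ℤ)+j) = (k:ℤ)*((k:ℤ)+(j+1)) + ((k:ℤ)+(j+1)) := by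
          push_cast; ring
        have q2 : 0 ≤ (k:ℤ)*((k:ℤ)+(j+1)) :=
          mul_nonneg (by positivity) (by push_cast at h; omega)
        have he : c1 + 3*((((k+1:ℕ):ℤ)*(((k+1:ℕ):ℤ)+j)).toNat) + 3*(m-k)
            = c3 + 3*(((k:ℤ)*((k:ℤ)+(j+1))).toNat) := by
          have hc : ((m-k:ℕ):ℤ) = (m:ℤ)-(k:ℤ) := by push_cast [Nat.cast_sub hk']; ring
          omega
        rw [← he, pow_add]
        ring
      · rw [if_neg h, if_neg h, if_neg (by push_cast at h ⊢; omega)]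
        ring
    rw [Finset.sum_congr rfl hsplit, Finset.sum_add_distrib]
    ring
  have step2 : (∑ k ∈ range (m+2), (if 0 ≤ (k:ℤ)+j then
          X^(c1 + 3*(((k:ℤ)*((k:ℤ)+j)).toNat)) * Bq m k * Bq (m+1-k) (((k:ℤ)+j).toNat)
        else 0)) = Sq m c1 1 (j-1) + Sq m c2 1 j := by
    unfold Sq
    simp only [Nat.cast_one]
    rw [Finset.sum_range_succ, hBm1]
    simp only [zero_mul, mul_zero, ite_self, add_zero]
    rw [← Finset.sum_add_distrib]
    refine Finset.sum_congr rfl fun k hk => ?_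
    have hk' : k ≤ m := Nat.lt_succ_iff.mp (Finset.mem_range.mp hk)
    by_cases h : 0 ≤ (k:ℤ) + j
    · rcases eq_or_lt_of_le h with h0 | h1
      · -- k + j = 0
        rw [if_pos h, if_neg (by omega), if_pos (by omega)]
        have e1 : (k:ℤ) + j = 0 := h0.symm
        have q1 : (k:ℤ) * ((k:ℤ)+j) = 0 := by rw [e1, mul_zero]
        have q2 : (k:ℤ) * ((k:ℤ)+j+1) = k := by
          rw [show (k:ℤ)+j+1 = 1 by omega, mul_one]
        have harg : ((k:ℤ)+j).toNat = 0 := by omega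
        have he : c1 + 3*(((k:ℤ)*((k:ℤ)+j)).toNat)
            = c2 + 3*(((k:ℤ)*((k:ℤ)+j+1)).toNat) := by omega
        rw [harg, he, Bq_zero, Bq_zero]
        ring
      · -- k + j ≥ 1
        rw [if_pos h, if_pos (by omega), if_pos h]
        have hs : ((k:ℤ)+j).toNat = (((k:ℤ)+(j-1)).toNat) + 1 := by omega
        set s : ℕ := ((k:ℤ)+(j-1)).toNat with hs_def
        have hmk : m + 1 - k = (m-k) + 1 := by omega
        rw [hs, hmk, Bq_succ (m-k) s]
        have q2 : 0 ≤ (k:ℤ)*((k:ℤ)+j) := mul_nonneg (by positivity) (by omega)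
        have q3 : (k:ℤ) * ((k:ℤ)+j+1) = (k:ℤ)*((k:ℤ)+j) + k := by ring
        have q4 : (k:ℤ) * ((k:ℤ)+(j-1)+1) = (k:ℤ)*((k:ℤ)+j) := by ring
        have he : c2 + 3*(((k:ℤ)*((k:ℤ)+j+1)).toNat)
            = (c1 + 3*(((k:ℤ)*((k:ℤ)+j)).toNat)) + 3*(s+1) := by omega
        rw [he, q4, pow_add]
        ring
    · rw [if_neg h, if_neg (by omega), if_neg h]
      ring
  rw [step1, step2]
  try ring

noncomputable def ZR (m : ℕ) : Polynomial ℤ :=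
  ∑ j ∈ Finset.Icc (-(m:ℤ)-1) ((m:ℤ)+1), Sq m (Pw j) 1 (j-1)

lemma sum_Icc_shift (a b : ℤ) (f : ℤ → Polynomial ℤ) :
    ∑ j ∈ Finset.Icc a b, f (j+1) = ∑ j ∈ Finset.Icc (a+1) (b+1), f j := by
  rw [← map_add_right_Icc a b 1, Finset.sum_map]
  rfl

lemma Sq_scale1 (m c δ : ℕ) (a : ℤ) : X * Sq m c δ a = Sq m (1+c) δ a := by
  have h := Sq_scale 1 m c δ a
  rwa [pow_one] at h

/-- change ranges for sums of `Sq m _ 1 (j-1)` (support `1-m ≤ j ≤ m+1`). -/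
lemma sum_Sq_range (m : ℕ) (c : ℤ → ℕ) (a b a' b' : ℤ)
    (ha : a ≤ -(m:ℤ)+1) (hb : (m:ℤ)+1 ≤ b) (ha' : a' ≤ -(m:ℤ)+1) (hb' : (m:ℤ)+1 ≤ b') :
    ∑ j ∈ Finset.Icc a b, Sq m (c j) 1 (j-1) = ∑ j ∈ Finset.Icc a' b', Sq m (c j) 1 (j-1) := by
  have key : ∀ u v : ℤ, u ≤ -(m:ℤ)+1 → (m:ℤ)+1 ≤ v → min a a' ≤ u → v ≤ max b b' →
      ∑ j ∈ Finset.Icc u v, Sq m (c j) 1 (j-1)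
        = ∑ j ∈ Finset.Icc (min a a') (max b b'), Sq m (c j) 1 (j-1) := by
    intro u v hu hv hu2 hv2
    refine Finset.sum_subset (Finset.Icc_subset_Icc (by omega) (by omega))
      (fun x hx hx2 => ?_)
    simp only [Finset.mem_Icc] at hx hx2
    refine Sq_support ?_ _ _
    rcases le_or_gt x u with h | h
    · exact Or.inr (by omega)
    · exact Or.inl (by omega)
  rw [key a b ha hb (by omega) (by omega), key a' b' ha' hb' (by omega) (by omega)]

lemma ZR_eq (m : ℕ) :
    ∑ j ∈ Finset.Icc (-(m:ℤ)-1) ((m:ℤ)+1), Sq m (Pw (j+1)) 1 j = ZR m := by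
  calc ∑ j ∈ Finset.Icc (-(m:ℤ)-1) ((m:ℤ)+1), Sq m (Pw (j+1)) 1 j
      = ∑ j ∈ Finset.Icc (-(m:ℤ)-1) ((m:ℤ)+1), Sq m (Pw (j+1)) 1 ((j+1)-1) :=
        Finset.sum_congr rfl (fun j _ => by rw [add_sub_cancel_right])
    _ = ∑ j ∈ Finset.Icc (-(m:ℤ)-1+1) ((m:ℤ)+1+1), Sq m (Pw j) 1 (j-1) :=
        sum_Icc_shift _ _ (fun i => Sq m (Pw i) 1 (i-1))
    _ = ∑ j ∈ Finset.Icc (-(m:ℤ)-1) ((m:ℤ)+1), Sq m (Pw j) 1 (j-1) := by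
        rw [show -(m:ℤ)-1+1 = -(m:ℤ) by ring, show (m:ℤ)+1+1 = (m:ℤ)+2 by ring]
        exact sum_Sq_range m _ _ _ _ _ (by omega) (by omega) (by omega) (by omega)
    _ = ZR m := rfl

lemma schurR_succ_eq (m : ℕ) : schurR (m+1)
    = ∑ j ∈ Finset.Icc (-(m:ℤ)-1) ((m:ℤ)+1), Sq (m+1) (Pw j) 0 j := by
  rw [schurR_eq (m+1)]
  congr 1
  congr 1 <;> push_cast <;> ring

lemma E1 (m : ℕ) :
    X * schurR (m+1) = X * ZR m + ZR m + X^(3*m+3) * schurR m := by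
  rw [schurR_succ_eq m, Finset.mul_sum]
  have hstep : ∀ j ∈ Finset.Icc (-(m:ℤ)-1) ((m:ℤ)+1),
      X * Sq (m+1) (Pw j) 0 j
      = Sq m (1+Pw j) 1 (j-1) + Sq m (Pw (j+1)) 1 j
        + Sq m (1+Pw j+3*(((m:ℤ)+1+j).toNat)) 0 (j+1) := by
    intro j hj
    obtain ⟨hj1, hj2⟩ := Finset.mem_Icc.mp hj
    rw [Sq_scale1]
    refine PJ1 m j (1+Pw j) (Pw (j+1)) _ ?_ ?_
    · rw [Pw_succ j]; push_cast; ring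
    · have ht : ((((m:ℤ)+1+j).toNat : ℤ)) = (m:ℤ)+1+j := Int.toNat_of_nonneg (by omega)
      push_cast [ht]
      ring
  rw [Finset.sum_congr rfl hstep, Finset.sum_add_distrib, Finset.sum_add_distrib]
  have hS1 : ∑ j ∈ Finset.Icc (-(m:ℤ)-1) ((m:ℤ)+1), Sq m (1+Pw j) 1 (j-1) = X * ZR m := by
    unfold ZR
    rw [Finset.mul_sum]
    exact Finset.sum_congr rfl fun j _ => (Sq_scale1 _ _ _ _).symm
  have hS3 : ∑ j ∈ Finset.Icc (-(m:ℤ)-1) ((m:ℤ)+1),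
      Sq m (1+Pw j+3*(((m:ℤ)+1+j).toNat)) 0 (j+1) = X^(3*m+3) * schurR m := by
    calc ∑ j ∈ Finset.Icc (-(m:ℤ)-1) ((m:ℤ)+1), Sq m (1+Pw j+3*(((m:ℤ)+1+j).toNat)) 0 (j+1)
        = ∑ j ∈ Finset.Icc (-(m:ℤ)-1) ((m:ℤ)+1),
            Sq m (1+Pw ((j+1)-1)+3*(((m:ℤ)+(j+1)).toNat)) 0 (j+1) := by
          refine Finset.sum_congr rfl fun j _ => ?_
          have hc : 1+Pw ((j+1)-1)+3*(((m:ℤ)+(j+1)).toNat)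
              = 1+Pw j+3*(((m:ℤ)+1+j).toNat) := by
            rw [add_sub_cancel_right]; omega
          rw [hc]
      _ = ∑ j ∈ Finset.Icc (-(m:ℤ)-1+1) ((m:ℤ)+1+1),
            Sq m (1+Pw (j-1)+3*(((m:ℤ)+j).toNat)) 0 j :=
          sum_Icc_shift _ _ (fun i => Sq m (1+Pw (i-1)+3*(((m:ℤ)+i).toNat)) 0 i)
      _ = ∑ j ∈ Finset.Icc (-(m:ℤ)) ((m:ℤ)+2), Sq m ((3*m+3) + Pw j) 0 j := by
          rw [show -(m:ℤ)-1+1 = -(m:ℤ) by ring, show (m:ℤ)+1+1 = (m:ℤ)+2 by ring]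
          refine Finset.sum_congr rfl fun j hj => ?_
          obtain ⟨hj1, hj2⟩ := Finset.mem_Icc.mp hj
          congr 1
          have hp := Pw_succ (j-1)
          rw [sub_add_cancel] at hp
          have ht : (((m:ℤ)+j).toNat : ℤ) = (m:ℤ)+j := Int.toNat_of_nonneg (by omega)
          omega
      _ = ∑ j ∈ Finset.Icc (-(m:ℤ)) ((m:ℤ)), Sq m ((3*m+3) + Pw j) 0 j :=
          (Finset.sum_subset (Finset.Icc_subset_Icc le_rfl (by omega))
            (fun x hx hx2 => by
              simp only [Finset.mem_Icc] at hx hx2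
              exact Sq_support (Or.inl (by omega)) _ _)).symm
      _ = X^(3*m+3) * schurR m := by
          rw [schurR_eq, Finset.mul_sum]
          exact Finset.sum_congr rfl fun j _ => (Sq_scale _ _ _ _ _).symm
  rw [hS1, ZR_eq, hS3]

lemma E2 (m : ℕ) :
    X * schurR (m+1) = ZR (m+1) + (1-X^(3*(m+1))) * (X * ZR m) := by
  rw [schurR_succ_eq m, Finset.mul_sum]
  have hstep : ∀ j ∈ Finset.Icc (-(m:ℤ)-1) ((m:ℤ)+1),
      X * Sq (m+1) (Pw j) 0 j
      = Sq (m+1) (Pw (j+1)) 1 j + (1-X^(3*(m+1))) * Sq m (1+Pw j) 1 (j-1) := by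
    intro j hj
    rw [Sq_scale1]
    refine PJ2 m j (1+Pw j) (Pw (j+1)) ?_
    rw [Pw_succ j]; push_cast; ring
  rw [Finset.sum_congr rfl hstep, Finset.sum_add_distrib]
  have hT1 : ∑ j ∈ Finset.Icc (-(m:ℤ)-1) ((m:ℤ)+1), Sq (m+1) (Pw (j+1)) 1 j
      = ZR (m+1) := by
    calc ∑ j ∈ Finset.Icc (-(m:ℤ)-1) ((m:ℤ)+1), Sq (m+1) (Pw (j+1)) 1 j
        = ∑ j ∈ Finset.Icc (-(m:ℤ)-1) ((m:ℤ)+1), Sq (m+1) (Pw (j+1)) 1 ((j+1)-1) :=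
          Finset.sum_congr rfl (fun j _ => by rw [add_sub_cancel_right])
      _ = ∑ j ∈ Finset.Icc (-(m:ℤ)-1+1) ((m:ℤ)+1+1), Sq (m+1) (Pw j) 1 (j-1) :=
          sum_Icc_shift _ _ (fun i => Sq (m+1) (Pw i) 1 (i-1))
      _ = ∑ j ∈ Finset.Icc (-(↑(m+1):ℤ)-1) ((↑(m+1):ℤ)+1), Sq (m+1) (Pw j) 1 (j-1) := by
          rw [show -(m:ℤ)-1+1 = -(m:ℤ) by ring, show (m:ℤ)+1+1 = (m:ℤ)+2 by ring,
            show (-(↑(m+1):ℤ)-1) = -(m:ℤ)-2 by push_cast; ring,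
            show ((↑(m+1):ℤ)+1) = (m:ℤ)+2 by push_cast; ring]
          exact sum_Sq_range (m+1) _ _ _ _ _ (by push_cast; omega) (by push_cast; omega)
            (by push_cast; omega) (by push_cast; omega)
      _ = ZR (m+1) := rfl
  have hT2 : ∑ j ∈ Finset.Icc (-(m:ℤ)-1) ((m:ℤ)+1), (1-X^(3*(m+1))) * Sq m (1+Pw j) 1 (j-1)
      = (1-X^(3*(m+1))) * (X * ZR m) := by
    unfold ZR
    rw [Finset.mul_sum, Finset.mul_sum]
    refine Finset.sum_congr rfl fun j _ => ?_
    rw [Sq_scale1]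
  rw [hT1, hT2]

theorem schurR_recurrence (N : ℕ) (hN : 2 ≤ N) :
    schurR N
      = (1 + Polynomial.X ^ (3 * N - 2) + Polynomial.X ^ (3 * N - 1)) * schurR (N - 1)
        + Polynomial.X ^ (3 * N - 3) * (1 - Polynomial.X ^ (3 * N - 3)) * schurR (N - 2) := by
  obtain ⟨n, rfl⟩ : ∃ n, N = n + 2 := ⟨N - 2, by omega⟩
  rw [show 3*(n+2)-2 = 3*n+4 by omega, show 3*(n+2)-1 = 3*n+5 by omega,
    show 3*(n+2)-3 = 3*n+3 by omega, show n+2-1 = n+1 by omega, show n+2-2 = n by omega]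
  have hE1a := E1 (n+1)
  have hE1b := E1 n
  have hE2 := E2 n
  have key : X * schurR (n+2)
      = X * ((1 + X^(3*n+4) + X^(3*n+5)) * schurR (n+1)
          + X^(3*n+3) * (1 - X^(3*n+3)) * schurR n) := by
    linear_combination hE1a - (X+1)*hE2 + X*(1-X^(3*n+3))*hE1b
  exact mul_left_cancel₀ Polynomial.X_ne_zero key
end

section
/- For every nonneg integer N and |q|<1, the identity Σ_{k,l ≥ 0, k+l ≤ N} q^{k + l(3l+1)/2} · (q³;q³)_N / ((q³;q³)_{N-k-l} (q³;q³)_k (q³;q³)_l) = Σ_{k=0}^{N} q^k · [N choose k]_{q³} · (-q²; q³)_{N-k} holds as an identity of polynomials in q. -/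
open Finset

/-- The finite q-Pochhammer symbol `(a; Q)_n = ∏_{i=0}^{n-1} (1 - a Q^i)`. -/
noncomputable def qPoch (a Q : ℂ) (n : ℕ) : ℂ :=
  ∏ i ∈ range n, (1 - a * Q ^ i)

lemma qPoch_zero (a Q : ℂ) : qPoch a Q 0 = 1 := by simp [qPoch]

lemma qPoch_succ (a Q : ℂ) (n : ℕ) :
    qPoch a Q (n + 1) = qPoch a Q n * (1 - a * Q ^ n) := by
  simp [qPoch, prod_range_succ]

lemma qPoch_ne_zero (q : ℂ) (hq : ‖q‖ < 1) (n : ℕ) :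
    qPoch (q ^ 3) (q ^ 3) n ≠ 0 := by
  unfold qPoch
  rw [Finset.prod_ne_zero_iff]
  intro i _ h
  have h1 : q ^ 3 * (q ^ 3) ^ i = 1 := by
    have := sub_eq_zero.mp h
    linear_combination -this
  have h2 : ‖q ^ 3 * (q ^ 3) ^ i‖ < 1 := by
    rw [norm_mul, norm_pow, norm_pow, norm_pow]
    have h3 : ‖q‖ ^ 3 < 1 := pow_lt_one₀ (norm_nonneg q) hq (by norm_num)
    have h4 : (‖q‖ ^ 3) ^ i ≤ 1 :=
      pow_le_one₀ (pow_nonneg (norm_nonneg q) 3) h3.le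
    nlinarith [pow_nonneg (norm_nonneg q) 3,
      pow_nonneg (pow_nonneg (norm_nonneg q) 3) i]
  rw [h1] at h2
  simp at h2

/-- Finite q-binomial theorem. -/
lemma qbinom_s12 (Q x : ℂ) (hP : ∀ n, qPoch Q Q n ≠ 0) (M : ℕ) :
    qPoch (-x) Q M = ∑ l ∈ range (M + 1), Q ^ l.choose 2 * x ^ l *
      (qPoch Q Q M / (qPoch Q Q l * qPoch Q Q (M - l))) := by
  induction M with
  | zero => simp [qPoch]
  | succ M ih =>
    have key : ∀ l ∈ range (M + 2),
        Q ^ l.choose 2 * x ^ l *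
          (qPoch Q Q (M + 1) / (qPoch Q Q l * qPoch Q Q (M + 1 - l)))
        = (if l ≤ M then Q ^ l.choose 2 * x ^ l *
              (qPoch Q Q M / (qPoch Q Q l * qPoch Q Q (M - l))) else 0)
          + (if l = 0 then 0 else Q ^ l.choose 2 * x ^ l * Q ^ (M + 1 - l) *
              (qPoch Q Q M / (qPoch Q Q (l - 1) * qPoch Q Q (M + 1 - l)))) := by
      intro l hl
      rw [mem_range] at hl
      rcases Nat.eq_zero_or_pos l with rfl | hl0
      · rw [if_pos (Nat.zero_le M), if_pos rfl, add_zero]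
        simp only [Nat.sub_zero]
        rw [qPoch_zero, one_mul, one_mul, div_self (hP (M + 1)), div_self (hP M)]
      · rcases Nat.lt_or_ge l (M + 1) with hlM | hlM
        · -- 1 ≤ l ≤ M : Pascal recurrence
          obtain ⟨j, rfl⟩ : ∃ j, l = j + 1 := ⟨l - 1, by omega⟩
          obtain ⟨r, rfl⟩ : ∃ r, M = j + 1 + r := ⟨M - (j + 1), by omega⟩
          rw [if_pos (by omega), if_neg (by omega)]
          have e1 : j + 1 + r + 1 - (j + 1) = r + 1 := by omega
          have e2 : j + 1 + r - (j + 1) = r := by omega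
          have e3 : j + 1 - 1 = j := by omega
          rw [e1, e2, e3]
          have ha : (1 - Q * Q ^ j) ≠ 0 := by
            intro h
            exact hP (j + 1) (by rw [qPoch_succ, h, mul_zero])
          have hb : (1 - Q * Q ^ r) ≠ 0 := by
            intro h
            exact hP (r + 1) (by rw [qPoch_succ, h, mul_zero])
          have hA := hP j
          have hB := hP r
          have hC := hP (j + 1 + r)
          rw [show j + 1 + r + 1 = (j + 1 + r) + 1 from rfl,
            qPoch_succ Q Q (j + 1 + r), qPoch_succ Q Q j, qPoch_succ Q Q r]
          field_simp [hA, hB, hC, ha, hb]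
          ring
        · -- l = M + 1
          have : l = M + 1 := by omega
          subst this
          rw [if_neg (by omega), if_neg (by omega), zero_add]
          have e1 : M + 1 - (M + 1) = 0 := by omega
          have e2 : M + 1 - 1 = M := by omega
          simp only [e1, e2, qPoch_zero, pow_zero, mul_one, zero_add,
            div_self (hP (M + 1)), div_self (hP M)]
    rw [qPoch_succ, ih, Finset.sum_congr rfl key, Finset.sum_add_distrib]
    have hS1 : (∑ l ∈ range (M + 2), if l ≤ M then Q ^ l.choose 2 * x ^ l *
          (qPoch Q Q M / (qPoch Q Q l * qPoch Q Q (M - l))) else 0)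
        = ∑ l ∈ range (M + 1), Q ^ l.choose 2 * x ^ l *
          (qPoch Q Q M / (qPoch Q Q l * qPoch Q Q (M - l))) := by
      rw [Finset.sum_range_succ, if_neg (by omega), add_zero]
      refine Finset.sum_congr rfl fun l hl => ?_
      rw [mem_range] at hl
      rw [if_pos (by omega)]
    have hS2 : (∑ l ∈ range (M + 2), if l = 0 then 0 else
          Q ^ l.choose 2 * x ^ l * Q ^ (M + 1 - l) *
            (qPoch Q Q M / (qPoch Q Q (l - 1) * qPoch Q Q (M + 1 - l))))
        = ∑ l ∈ range (M + 1), Q ^ l.choose 2 * x ^ l *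
          (qPoch Q Q M / (qPoch Q Q l * qPoch Q Q (M - l))) * (x * Q ^ M) := by
      rw [Finset.sum_range_succ', if_pos rfl, add_zero]
      refine Finset.sum_congr rfl fun l hl => ?_
      rw [mem_range] at hl
      rw [if_neg (Nat.succ_ne_zero l)]
      have e1 : M + 1 - (l + 1) = M - l := by omega
      have e2 : l + 1 - 1 = l := by omega
      have e3 : (l + 1).choose 2 = l + l.choose 2 := by
        rw [Nat.choose_succ_succ, Nat.choose_one_right]
      have e4 : M = l + (M - l) := by omega
      have e5 : Q ^ l * Q ^ (M - l) = Q ^ M := by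
        rw [← pow_add]
        congr 1
        omega
      rw [e1, e2, e3, pow_add, pow_succ x l, ← e5]
      ring
    rw [hS1, hS2, ← Finset.sum_mul]
    ring

lemma expo (l : ℕ) : l * (3 * l + 1) / 2 = 3 * l.choose 2 + 2 * l := by
  induction l with
  | zero => rfl
  | succ n ih =>
    have h1 : (n + 1) * (3 * (n + 1) + 1) = n * (3 * n + 1) + (6 * n + 4) := by
      ring
    have h2 : Even (n * (3 * n + 1)) := by
      rcases Nat.even_or_odd n with h | h
      · exact h.mul_right _
      · have : Odd (3 * n) := (Nat.odd_iff.mpr rfl).mul h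
        exact Even.mul_left (by simpa using this.add_one) n
    obtain ⟨c, hc⟩ := h2
    have e3 : (n + 1).choose 2 = n + n.choose 2 := by
      rw [Nat.choose_succ_succ, Nat.choose_one_right]
    rw [hc] at ih
    rw [h1, hc, e3]
    omega

theorem trinomial_T0_to_binomials (N : ℕ) (q : ℂ) (hq : ‖q‖ < 1) :
    ∑ k ∈ range (N + 1), ∑ l ∈ range (N + 1),
      (if k + l ≤ N then
        q ^ (k + l * (3 * l + 1) / 2) * qPoch (q ^ 3) (q ^ 3) N /
          (qPoch (q ^ 3) (q ^ 3) (N - k - l) * qPoch (q ^ 3) (q ^ 3) k *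
            qPoch (q ^ 3) (q ^ 3) l)
      else 0)
      = ∑ k ∈ range (N + 1),
          q ^ k * (qPoch (q ^ 3) (q ^ 3) N /
              (qPoch (q ^ 3) (q ^ 3) k * qPoch (q ^ 3) (q ^ 3) (N - k))) *
            qPoch (-q ^ 2) (q ^ 3) (N - k) := by
  have hP : ∀ n, qPoch (q ^ 3) (q ^ 3) n ≠ 0 := qPoch_ne_zero q hq
  refine Finset.sum_congr rfl fun k hk => ?_
  rw [mem_range] at hk
  have hkN : k ≤ N := by omega
  rw [qbinom_s12 (q ^ 3) (q ^ 2) hP (N - k), Finset.mul_sum]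
  have hfil : filter (fun l => k + l ≤ N) (range (N + 1)) = range (N - k + 1) := by
    ext l
    simp only [mem_filter, mem_range, Nat.lt_succ_iff]
    omega
  rw [← Finset.sum_filter, hfil]
  refine Finset.sum_congr rfl fun l hl => ?_
  rw [mem_range] at hl
  have hlN : l ≤ N - k := by omega
  rw [expo, pow_add, pow_add, pow_mul q 3, pow_mul q 2]
  field_simp [hP k, hP l, hP (N - k), hP (N - k - l)]
end
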